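/- Let p ∈ ℝ^K be a probability vector with p_k > 0 for all k, and consider a gradient-ascent-style update on logits s with p = softmax(s): for the negative-gradient update s' = s + η(p - e_y) with η > 0 applied to class y, the probability of class y strictly decreases: softmax(s')_y < p_y. -/
import Mathlib


noncomputable def softmax {K : ℕ} (s : Fin K → ℝ) (k : Fin K) : ℝ :=
  Real.exp (s k) / ∑ j, Real.exp (s j)

lemma softmax_add_lt {K : ℕ} (s d : Fin K → ℝ) (y : Fin K)
    (hd : ∀ j, d y ≤ d j) (hstrict : ∃ j, d y < d j) :
    softmax (fun k => s k + d k) y < softmax s y := by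
  obtain ⟨j0, hj0⟩ := hstrict
  unfold softmax
  have hS : 0 < ∑ j, Real.exp (s j) :=
    Finset.sum_pos (fun j _ => Real.exp_pos _) ⟨y, Finset.mem_univ y⟩
  have hS' : 0 < ∑ j, Real.exp (s j + d j) :=
    Finset.sum_pos (fun j _ => Real.exp_pos _) ⟨y, Finset.mem_univ y⟩
  rw [div_lt_div_iff₀ hS' hS]
  simp only [Real.exp_add, Finset.mul_sum]
  refine Finset.sum_lt_sum (fun j _ => ?_) ⟨j0, Finset.mem_univ j0, ?_⟩
  · calc Real.exp (s y) * Real.exp (d y) * Real.exp (s j)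
        = (Real.exp (s y) * Real.exp (s j)) * Real.exp (d y) := by ring
      _ ≤ (Real.exp (s y) * Real.exp (s j)) * Real.exp (d j) :=
          mul_le_mul_of_nonneg_left (Real.exp_le_exp.2 (hd j)) (by positivity)
      _ = Real.exp (s y) * (Real.exp (s j) * Real.exp (d j)) := by ring
  · calc Real.exp (s y) * Real.exp (d y) * Real.exp (s j0)
        = (Real.exp (s y) * Real.exp (s j0)) * Real.exp (d y) := by ring
      _ < (Real.exp (s y) * Real.exp (s j0)) * Real.exp (d j0) :=
          mul_lt_mul_of_pos_left (Real.exp_lt_exp.2 hj0) (by positivity)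
      _ = Real.exp (s y) * (Real.exp (s j0) * Real.exp (d j0)) := by ring

theorem negative_gradient_decreases_target {K : ℕ} (hK : 1 < K)
    (s : Fin K → ℝ) (y : Fin K) (η : ℝ) (hη : 0 < η) :
    softmax (fun k => s k + η * (softmax s k - if k = y then 1 else 0)) y
      < softmax s y := by
  have hS : 0 < ∑ j, Real.exp (s j) :=
    Finset.sum_pos (fun j _ => Real.exp_pos _) ⟨y, Finset.mem_univ y⟩
  have hppos : ∀ k, 0 < softmax s k := fun k => div_pos (Real.exp_pos _) hS
  have hpy : softmax s y ≤ 1 := by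
    unfold softmax
    rw [div_le_one hS]
    exact Finset.single_le_sum (fun j _ => (Real.exp_pos _).le) (Finset.mem_univ y)
  haveI : Nontrivial (Fin K) := Fin.nontrivial_iff_two_le.mpr hK
  obtain ⟨j0, hj0⟩ := exists_ne y
  refine softmax_add_lt s _ y (fun j => ?_) ⟨j0, ?_⟩
  · rcases eq_or_ne j y with h | h
    · subst h; exact le_rfl
    · rw [if_pos rfl, if_neg h]
      have h1 : softmax s y - 1 ≤ softmax s j - 0 := by linarith [hppos j]
      exact mul_le_mul_of_nonneg_left h1 hη.le
  · rw [if_pos rfl, if_neg hj0]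
    have h1 : softmax s y - 1 < softmax s j0 - 0 := by linarith [hppos j0]
    exact mul_lt_mul_of_pos_left h1 hη
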